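/- The lengths e_{n,1} ≤ e_{n,2} of the semi-axes of the ellipse (Aⁿ − I)^{−1} B(0, e^{−nτ}) satisfy C^{−1} ≤ e_{n,1}/λ_{n,2} ≤ C and C^{−1} ≤ e_{n,2}/λ_{n,1} ≤ C for a constant C > 1 depending only on A, where λ_{n,1} = e^{−τn}/|1 − λ₁ⁿ| and λ_{n,2} = e^{−τn}/|λ₂ⁿ − 1|. -/

import Mathlib

/-- The ellipse `(Aⁿ - I)⁻¹ B(0, e^{-nτ})` (as a subset of Euclidean `ℝ²`). -/
noncomputable def ellipse (A : Matrix (Fin 2) (Fin 2) ℝ) (τ : ℝ) (n : ℕ) :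
    Set (EuclideanSpace ℝ (Fin 2)) :=
  {x | ‖Matrix.toEuclideanLin (A ^ n - 1) x‖ ≤ Real.exp (-(n : ℝ) * τ)}

/-- The length of the major semi-axis of the ellipse: the largest distance from
the centre `0` to a point of the ellipse. -/
noncomputable def semiAxisMajor (A : Matrix (Fin 2) (Fin 2) ℝ) (τ : ℝ) (n : ℕ) : ℝ :=
  sSup (norm '' ellipse A τ n)

/-- The length of the minor semi-axis of the ellipse: the largest radius `ρ`
such that `B(0,ρ)` is contained in the ellipse. -/
noncomputable def semiAxisMinor (A : Matrix (Fin 2) (Fin 2) ℝ) (τ : ℝ) (n : ℕ) : ℝ :=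
  sInf (norm '' (ellipse A τ n)ᶜ)

noncomputable def evec (a b : ℝ) : EuclideanSpace ℝ (Fin 2) := WithLp.toLp 2 ![a, b]

lemma evec_coord_abs_le (x : EuclideanSpace ℝ (Fin 2)) (i : Fin 2) : |x i| ≤ ‖x‖ := by
  rw [EuclideanSpace.norm_eq]
  rw [show |x i| = Real.sqrt (‖x i‖^2) by
    rw [Real.norm_eq_abs, Real.sqrt_sq_eq_abs, abs_abs]]
  apply Real.sqrt_le_sqrt
  exact Finset.single_le_sum (f := fun j => ‖x j‖^2) (fun j _ => by positivity)
    (Finset.mem_univ i)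

lemma evec_repr (γ β : ℝ) (hne : γ ≠ β) (x : EuclideanSpace ℝ (Fin 2)) :
    x = ((x 1 - β * x 0)/(γ - β)) • evec 1 γ + ((γ * x 0 - x 1)/(γ - β)) • evec 1 β := by
  have h : γ - β ≠ 0 := sub_ne_zero.mpr hne
  ext i
  fin_cases i <;> simp [evec, PiLp.add_apply, PiLp.smul_apply] <;> field_simp <;> ring

lemma evec_norm_pos (a : ℝ) : 0 < ‖evec 1 a‖ := by
  have h0 : evec 1 a ≠ 0 := by
    intro h
    have := congrArg (fun v : EuclideanSpace ℝ (Fin 2) => v 0) h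
    simp [evec] at this
  exact norm_pos_iff.mpr h0

lemma pow_mulVec_eig (A : Matrix (Fin 2) (Fin 2) ℝ) (l c : ℝ)
    (hc : A.mulVec ![1, c] = l • ![1, c]) (n : ℕ) :
    (A ^ n).mulVec ![1, c] = (l ^ n) • ![1, c] := by
  induction n with
  | zero => simp [Matrix.one_mulVec]
  | succ n ih =>
    rw [pow_succ, ← Matrix.mulVec_mulVec, hc, Matrix.mulVec_smul, ih, smul_smul, pow_succ]
    ring_nf

lemma toEuclideanLin_eig (A : Matrix (Fin 2) (Fin 2) ℝ) (l c : ℝ)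
    (hc : A.mulVec ![1, c] = l • ![1, c]) (n : ℕ) :
    Matrix.toEuclideanLin (A ^ n - 1) (evec 1 c) = (l ^ n - 1) • evec 1 c := by
  ext i
  have h0 : Matrix.toEuclideanLin (A ^ n - 1) (evec 1 c) i = (A ^ n - 1).mulVec ![1, c] i := rfl
  rw [h0, Matrix.sub_mulVec, pow_mulVec_eig A l c hc n, Matrix.one_mulVec]
  show (l ^ n) • (![1, c] : Fin 2 → ℝ) i - ![1, c] i = (l ^ n - 1) * ![1, c] i
  simp [sub_mul]

set_option maxHeartbeats 1000000 in
/-- The semi-axes `e_{n,1} ≤ e_{n,2}` of `(Aⁿ - I)⁻¹ B(0, e^{-nτ})` satisfy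
`C⁻¹ ≤ e_{n,1}/λ_{n,2} ≤ C` and `C⁻¹ ≤ e_{n,2}/λ_{n,1} ≤ C` for a constant
`C > 1` depending only on `A`, where `λ_{n,1} = e^{-τn}/|1 - λ₁ⁿ|` and
`λ_{n,2} = e^{-τn}/|λ₂ⁿ - 1|`. -/
theorem semiAxes_comparable (A : Matrix (Fin 2) (Fin 2) ℝ) (l₁ l₂ γ β : ℝ)
    (hne : γ ≠ β)
    (h0 : 0 < |l₁|) (h1 : |l₁| < 1) (h2 : 1 < |l₂|)
    (hγ : A.mulVec ![1, γ] = l₂ • ![1, γ])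
    (hβ : A.mulVec ![1, β] = l₁ • ![1, β]) :
    ∃ C : ℝ, 1 < C ∧ ∀ τ : ℝ, 0 < τ → ∀ n : ℕ, 1 ≤ n →
      (C⁻¹ ≤ semiAxisMinor A τ n / (Real.exp (-τ * n) / |l₂ ^ n - 1|) ∧
        semiAxisMinor A τ n / (Real.exp (-τ * n) / |l₂ ^ n - 1|) ≤ C) ∧
      (C⁻¹ ≤ semiAxisMajor A τ n / (Real.exp (-τ * n) / |1 - l₁ ^ n|) ∧
        semiAxisMajor A τ n / (Real.exp (-τ * n) / |1 - l₁ ^ n|) ≤ C) := by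
  have hD : (0:ℝ) < |γ - β| := abs_pos.mpr (sub_ne_zero.mpr hne)
  set D := |γ - β| with hDdef
  set Cs := (1 + |β|)/D with hCs
  set Ct := (1 + |γ|)/D with hCt
  set N₂ := ‖evec 1 γ‖ with hN2
  set N₁ := ‖evec 1 β‖ with hN1
  have hN2p : 0 < N₂ := evec_norm_pos γ
  have hN1p : 0 < N₁ := evec_norm_pos β
  have hCsp : 0 < Cs := by positivity
  have hCtp : 0 < Ct := by positivity
  have hl2 : (0:ℝ) < |l₂| - 1 := by linarith
  set K := 2/(|l₂| - 1) with hK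
  have hKp : 0 < K := by positivity
  set cmin := Cs * N₂ + Ct * N₁ * K with hcmin
  set cmaj := Cs * N₂ * K + Ct * N₁ with hcmaj
  have hcminp : 0 < cmin := by positivity
  have hcmajp : 0 < cmaj := by positivity
  refine ⟨2 + cmin + cmaj, by linarith, ?_⟩
  intro τ hτ n hn
  set C := 2 + cmin + cmaj with hC
  have hC1 : 1 < C := by simp only [hC]; linarith
  have hCpos : (0:ℝ) < C := by linarith
  set r := Real.exp (-(n : ℝ) * τ) with hr
  have hrpos : 0 < r := Real.exp_pos _
  have hre : Real.exp (-τ * n) = r := by rw [hr]; congr 1; ring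
  set u := l₂ ^ n - 1 with hu
  set w := l₁ ^ n - 1 with hw
  have hun : |l₂| - 1 ≤ |u| := by
    have h1' : |l₂| ≤ |l₂| ^ n := le_self_pow₀ h2.le (by omega)
    have h2' : |l₂ ^ n| - |(1:ℝ)| ≤ |l₂ ^ n - 1| := abs_sub_abs_le_abs_sub _ _
    rw [abs_pow] at h2'
    simp only [abs_one] at h2'
    calc |l₂| - 1 ≤ |l₂| ^ n - 1 := by linarith
      _ ≤ |u| := h2'
  have hu0 : 0 < |u| := lt_of_lt_of_le hl2 hun
  have hl1n : |l₁| ^ n ≤ |l₁| := by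
    calc |l₁| ^ n ≤ |l₁| ^ 1 := pow_le_pow_of_le_one (abs_nonneg _) h1.le hn
      _ = |l₁| := pow_one _
  have hw0 : 0 < |w| := by
    have h2' : |(1:ℝ)| - |l₁ ^ n| ≤ |1 - l₁ ^ n| := abs_sub_abs_le_abs_sub _ _
    rw [abs_pow, abs_one] at h2'
    rw [hw, abs_sub_comm]
    linarith
  have hw2 : |w| ≤ 2 := by
    calc |w| ≤ |l₁ ^ n| + |(1:ℝ)| := abs_sub _ _
      _ = |l₁| ^ n + 1 := by rw [abs_pow, abs_one]
      _ ≤ 2 := by linarith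
  have hwKu : |w| ≤ K * |u| := by
    calc |w| ≤ 2 := hw2
      _ = K * (|l₂| - 1) := by rw [hK]; field_simp
      _ ≤ K * |u| := by
        apply mul_le_mul_of_nonneg_left hun hKp.le
  -- eigen equations for T := toEuclideanLin (A^n - 1)
  set T := Matrix.toEuclideanLin (A ^ n - 1) with hT
  have hTv2 : T (evec 1 γ) = u • evec 1 γ := toEuclideanLin_eig A l₂ γ hγ n
  have hTv1 : T (evec 1 β) = w • evec 1 β := toEuclideanLin_eig A l₁ β hβ n
  -- coefficient extraction
  have hcoef : ∀ (y : EuclideanSpace ℝ (Fin 2)) (a b : ℝ),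
      y = a • evec 1 γ + b • evec 1 β → |a| ≤ Cs * ‖y‖ ∧ |b| ≤ Ct * ‖y‖ := by
    intro y a b hy
    have hy0 : y 0 = a + b := by
      rw [hy]; simp [evec, PiLp.add_apply, PiLp.smul_apply]
    have hy1 : y 1 = a * γ + b * β := by
      rw [hy]; simp [evec, PiLp.add_apply, PiLp.smul_apply]
    have h0' : |y 0| ≤ ‖y‖ := evec_coord_abs_le y 0
    have h1' : |y 1| ≤ ‖y‖ := evec_coord_abs_le y 1
    constructor
    · have ha : a * (γ - β) = y 1 - β * y 0 := by rw [hy0, hy1]; ring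
      have : |a| * D = |y 1 - β * y 0| := by
        rw [hDdef, ← abs_mul, ha]
      have h3 : |y 1 - β * y 0| ≤ ‖y‖ + |β| * ‖y‖ := by
        calc |y 1 - β * y 0| ≤ |y 1| + |β * y 0| := abs_sub _ _
          _ = |y 1| + |β| * |y 0| := by rw [abs_mul]
          _ ≤ ‖y‖ + |β| * ‖y‖ := by
            have := mul_le_mul_of_nonneg_left h0' (abs_nonneg β); linarith
      rw [hCs, div_mul_eq_mul_div, le_div_iff₀ hD]
      calc |a| * D = |y 1 - β * y 0| := this
        _ ≤ ‖y‖ + |β| * ‖y‖ := h3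
        _ = (1 + |β|) * ‖y‖ := by ring
    · have hb : b * (γ - β) = γ * y 0 - y 1 := by rw [hy0, hy1]; ring
      have : |b| * D = |γ * y 0 - y 1| := by
        rw [hDdef, ← abs_mul, hb]
      have h3 : |γ * y 0 - y 1| ≤ |γ| * ‖y‖ + ‖y‖ := by
        calc |γ * y 0 - y 1| ≤ |γ * y 0| + |y 1| := abs_sub _ _
          _ = |γ| * |y 0| + |y 1| := by rw [abs_mul]
          _ ≤ |γ| * ‖y‖ + ‖y‖ := by
            have := mul_le_mul_of_nonneg_left h0' (abs_nonneg γ); linarith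
      rw [hCt, div_mul_eq_mul_div, le_div_iff₀ hD]
      calc |b| * D = |γ * y 0 - y 1| := this
        _ ≤ |γ| * ‖y‖ + ‖y‖ := h3
        _ = (1 + |γ|) * ‖y‖ := by ring
  -- action of T on a representation
  have hTact : ∀ (a b : ℝ),
      T (a • evec 1 γ + b • evec 1 β) = (a * u) • evec 1 γ + (b * w) • evec 1 β := by
    intro a b
    rw [map_add, map_smul, map_smul, hTv2, hTv1, smul_smul, smul_smul]
  -- membership in ellipse unfolded
  have hmem : ∀ x : EuclideanSpace ℝ (Fin 2), x ∈ ellipse A τ n ↔ ‖T x‖ ≤ r := by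
    intro x; rfl
  -- explicit boundary points
  set x₂ : EuclideanSpace ℝ (Fin 2) := (2 * r / (|u| * N₂)) • evec 1 γ with hx2
  have hsp2 : (0:ℝ) < 2 * r / (|u| * N₂) := by positivity
  have hTx2 : ‖T x₂‖ = 2 * r := by
    rw [hx2, map_smul, hTv2, smul_smul, norm_smul, Real.norm_eq_abs,
      abs_mul, abs_of_pos hsp2, ← hN2]
    field_simp
  have hx2mem : x₂ ∈ (ellipse A τ n)ᶜ := by
    intro h
    have h' := (hmem x₂).mp h
    rw [hTx2] at h'
    linarith
  have hx2norm : ‖x₂‖ = 2 * r / |u| := by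
    rw [hx2, norm_smul, Real.norm_eq_abs, abs_of_pos hsp2, ← hN2]
    field_simp
  set x₁ : EuclideanSpace ℝ (Fin 2) := (r / (|w| * N₁)) • evec 1 β with hx1
  have hsp1 : (0:ℝ) < r / (|w| * N₁) := by positivity
  have hTx1 : ‖T x₁‖ = r := by
    rw [hx1, map_smul, hTv1, smul_smul, norm_smul, Real.norm_eq_abs,
      abs_mul, abs_of_pos hsp1, ← hN1]
    field_simp
  have hx1mem : x₁ ∈ ellipse A τ n := (hmem x₁).mpr (le_of_eq hTx1)
  have hx1norm : ‖x₁‖ = r / |w| := by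
    rw [hx1, norm_smul, Real.norm_eq_abs, abs_of_pos hsp1, ← hN1]
    field_simp
  -- bound: every point outside the ellipse has norm ≥ r / (cmin * |u|)
  have hout : ∀ y ∈ (ellipse A τ n)ᶜ, r / (cmin * |u|) ≤ ‖y‖ := by
    intro y hy
    have hy' : r < ‖T y‖ := by
      by_contra hcon
      push_neg at hcon
      exact hy ((hmem y).mpr hcon)
    obtain ⟨ha, hb⟩ := hcoef y _ _ (evec_repr γ β hne y)
    set a := (y 1 - β * y 0)/(γ - β)
    set b := (γ * y 0 - y 1)/(γ - β)
    have hTy : T y = (a * u) • evec 1 γ + (b * w) • evec 1 β := by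
      conv_lhs => rw [evec_repr γ β hne y]
      exact hTact a b
    have hTybound : ‖T y‖ ≤ cmin * |u| * ‖y‖ := by
      rw [hTy]
      calc ‖(a * u) • evec 1 γ + (b * w) • evec 1 β‖
          ≤ ‖(a * u) • evec 1 γ‖ + ‖(b * w) • evec 1 β‖ := norm_add_le _ _
        _ = |a * u| * N₂ + |b * w| * N₁ := by
            rw [norm_smul, norm_smul, Real.norm_eq_abs, Real.norm_eq_abs]
        _ = |a| * |u| * N₂ + |b| * |w| * N₁ := by rw [abs_mul, abs_mul]
        _ ≤ (Cs * ‖y‖) * |u| * N₂ + (Ct * ‖y‖) * (K * |u|) * N₁ := by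
            have t1 : |a| * |u| * N₂ ≤ (Cs * ‖y‖) * |u| * N₂ := by
              apply mul_le_mul_of_nonneg_right _ hN2p.le
              exact mul_le_mul_of_nonneg_right ha hu0.le
            have t2 : |b| * |w| * N₁ ≤ (Ct * ‖y‖) * (K * |u|) * N₁ := by
              apply mul_le_mul_of_nonneg_right _ hN1p.le
              apply mul_le_mul hb hwKu (abs_nonneg _)
              positivity
            linarith
        _ = cmin * |u| * ‖y‖ := by rw [hcmin]; ring
    rw [div_le_iff₀ (by positivity)]
    nlinarith [hTybound, hy']
  -- bound: every point inside the ellipse has norm ≤ cmaj * (r / |w|)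
  have hin : ∀ x ∈ ellipse A τ n, ‖x‖ ≤ cmaj * (r / |w|) := by
    intro x hx
    rw [hmem] at hx
    set a := (x 1 - β * x 0)/(γ - β) with hadef
    set b := (γ * x 0 - x 1)/(γ - β) with hbdef
    have hxrep : x = a • evec 1 γ + b • evec 1 β := evec_repr γ β hne x
    have hTx : T x = (a * u) • evec 1 γ + (b * w) • evec 1 β := by
      conv_lhs => rw [hxrep]
      exact hTact a b
    obtain ⟨ha, hb⟩ := hcoef (T x) _ _ hTx
    have ha' : |a| * |u| ≤ Cs * r := by
      rw [← abs_mul]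
      calc |a * u| ≤ Cs * ‖T x‖ := ha
        _ ≤ Cs * r := mul_le_mul_of_nonneg_left hx hCsp.le
    have hb' : |b| * |w| ≤ Ct * r := by
      rw [← abs_mul]
      calc |b * w| ≤ Ct * ‖T x‖ := hb
        _ ≤ Ct * r := mul_le_mul_of_nonneg_left hx hCtp.le
    have haa : |a| ≤ Cs * r / |u| := by rw [le_div_iff₀ hu0]; linarith
    have hbb : |b| ≤ Ct * r / |w| := by rw [le_div_iff₀ hw0]; linarith
    have huw : Cs * r / |u| ≤ Cs * r * K / |w| := by
      rw [div_le_div_iff₀ hu0 hw0]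
      calc Cs * r * |w| ≤ Cs * r * (K * |u|) :=
            mul_le_mul_of_nonneg_left hwKu (by positivity)
        _ = Cs * r * K * |u| := by ring
    calc ‖x‖ = ‖a • evec 1 γ + b • evec 1 β‖ := by rw [← hxrep]
      _ ≤ ‖a • evec 1 γ‖ + ‖b • evec 1 β‖ := norm_add_le _ _
      _ = |a| * N₂ + |b| * N₁ := by
          rw [norm_smul, norm_smul, Real.norm_eq_abs, Real.norm_eq_abs]
      _ ≤ (Cs * r * K / |w|) * N₂ + (Ct * r / |w|) * N₁ := by
          have t1 : |a| * N₂ ≤ (Cs * r * K / |w|) * N₂ :=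
            mul_le_mul_of_nonneg_right (le_trans haa huw) hN2p.le
          have t2 : |b| * N₁ ≤ (Ct * r / |w|) * N₁ :=
            mul_le_mul_of_nonneg_right hbb hN1p.le
          linarith
      _ = cmaj * (r / |w|) := by rw [hcmaj]; field_simp
  -- semiAxisMinor bounds
  have hminor_lb : r / (cmin * |u|) ≤ semiAxisMinor A τ n := by
    apply le_csInf ⟨‖x₂‖, Set.mem_image_of_mem _ hx2mem⟩
    rintro z ⟨y, hy, rfl⟩
    exact hout y hy
  have hminor_ub : semiAxisMinor A τ n ≤ 2 * r / |u| := by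
    rw [← hx2norm]
    exact csInf_le ⟨0, by rintro z ⟨y, _, rfl⟩; exact norm_nonneg y⟩
      (Set.mem_image_of_mem _ hx2mem)
  -- semiAxisMajor bounds
  have hmajor_ub : semiAxisMajor A τ n ≤ cmaj * (r / |w|) := by
    apply Real.sSup_le
    · rintro z ⟨x, hx, rfl⟩
      exact hin x hx
    · positivity
  have hmajor_lb : r / |w| ≤ semiAxisMajor A τ n := by
    rw [← hx1norm]
    apply le_csSup ⟨cmaj * (r / |w|), ?_⟩ (Set.mem_image_of_mem _ hx1mem)
    rintro z ⟨x, hx, rfl⟩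
    exact hin x hx
  -- final assembly
  rw [hre]
  have hru : 0 < r / |u| := by positivity
  have hrw : 0 < r / |w| := by positivity
  have habs1 : |1 - l₁ ^ n| = |w| := by rw [hw, abs_sub_comm]
  have habs2 : |l₂ ^ n - 1| = |u| := rfl
  rw [habs1, habs2]
  refine ⟨⟨?_, ?_⟩, ?_, ?_⟩
  · -- C⁻¹ ≤ minor / (r/|u|)
    have e1 : (r / (cmin * |u|)) / (r / |u|) = cmin⁻¹ := by
      field_simp
    calc C⁻¹ ≤ cmin⁻¹ := by
          apply inv_anti₀ hcminp
          rw [hC]; linarith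
      _ = (r / (cmin * |u|)) / (r / |u|) := e1.symm
      _ ≤ semiAxisMinor A τ n / (r / |u|) := by gcongr
  · -- minor / (r/|u|) ≤ C
    calc semiAxisMinor A τ n / (r / |u|) ≤ (2 * r / |u|) / (r / |u|) := by
          gcongr
        _ = 2 := by field_simp
        _ ≤ C := by rw [hC]; linarith
  · -- C⁻¹ ≤ major / (r/|w|)
    have h1' : (1:ℝ) ≤ semiAxisMajor A τ n / (r / |w|) := (one_le_div hrw).mpr hmajor_lb
    have h2' : C⁻¹ ≤ 1 := inv_le_one_of_one_le₀ hC1.le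
    linarith
  · -- major / (r/|w|) ≤ C
    rw [div_le_iff₀ hrw]
    calc semiAxisMajor A τ n ≤ cmaj * (r / |w|) := hmajor_ub
      _ ≤ C * (r / |w|) := by
          apply mul_le_mul_of_nonneg_right _ hrw.le
          rw [hC]; linarith
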